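/- arXiv:1911.05855 — 7 statements merged into one kernel-verified Lean document; each statement's English description precedes it below -/
import Mathlib

section
/- Let n ≥ 2 and let λ : Fin n → ℝ be monotone (λ i ≤ λ j whenever i ≤ j) with 0 < λ i for every i. Then the following are equivalent: (a) for every x ∈ EuclideanSpace ℝ (Fin n) with ‖x‖ = 1 one has 4·(Σ_i x_i²·(λ i)²) < (Σ_i x_i²·(λ i))·(Σ_j λ j); (b) three times the largest value λ_{n-1} is strictly less than the sum of the remaining values, i.e. 3·λ_{n-1} < Σ_{i ≠ n-1} λ i. -/
/-- Theorem 5.1 (algebraic content): a Euclidean hypersurface with principal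
curvatures `0 < λ 0 ≤ ⋯ ≤ λ (n-1)` is Φ-SSU iff
`3 * λ (n-1) < λ 0 + ⋯ + λ (n-2)`. -/
theorem stmt_0 (n : ℕ) (hn : 2 ≤ n) (lam : Fin n → ℝ)
    (hmono : Monotone lam) (hpos : ∀ i, 0 < lam i) :
    (∀ x : EuclideanSpace ℝ (Fin n), ‖x‖ = 1 →
        4 * (∑ i, x i ^ 2 * lam i ^ 2) <
          (∑ i, x i ^ 2 * lam i) * (∑ j, lam j)) ↔
      3 * lam ⟨n - 1, by omega⟩ <
        ∑ i ∈ Finset.univ.erase (⟨n - 1, by omega⟩ : Fin n), lam i := by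
  set m : Fin n := ⟨n - 1, by omega⟩ with hm
  have hS : ∑ i ∈ Finset.univ.erase m, lam i = (∑ j, lam j) - lam m :=
    Finset.sum_erase_eq_sub (Finset.mem_univ m)
  constructor
  · intro h
    have hx := h (EuclideanSpace.single m 1) (by simp)
    have e1 : ∀ (c : Fin n → ℝ),
        (∑ i, (EuclideanSpace.single m (1:ℝ)) i ^ 2 * c i) = c m := by
      intro c
      rw [Finset.sum_eq_single m]
      · simp [EuclideanSpace.single_apply]
      · intro b _ hb; simp [EuclideanSpace.single_apply, hb]
      · simp
    rw [e1, e1] at hx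
    rw [hS]
    nlinarith [hpos m]
  · intro h x hx
    rw [hS] at h
    have hx2 : ∑ i, x i ^ 2 = 1 := by
      have hn2 := EuclideanSpace.norm_eq x
      rw [hx] at hn2
      have h2 : Real.sqrt (∑ i, x i ^ 2) = 1 := by
        rw [← hn2.symm]
        congr 1
        exact Finset.sum_congr rfl fun i _ => by rw [Real.norm_eq_abs, sq_abs]
      have hnn : 0 ≤ ∑ i, x i ^ 2 := Finset.sum_nonneg fun i _ => sq_nonneg _
      nlinarith [Real.sq_sqrt hnn, h2]
    have hle : ∀ i, lam i ≤ lam m := by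
      intro i
      exact hmono (by rw [Fin.le_def]; have := i.isLt; simp [hm]; omega)
    have hge : ∀ i, lam ⟨0, by omega⟩ ≤ lam i := by
      intro i
      exact hmono (by rw [Fin.le_def]; simp)
    have h1 : ∑ i, x i ^ 2 * lam i ^ 2 ≤ (∑ i, x i ^ 2 * lam i) * lam m := by
      rw [Finset.sum_mul]
      apply Finset.sum_le_sum
      intro i _
      calc x i ^ 2 * lam i ^ 2 = (x i ^ 2 * lam i) * lam i := by ring
        _ ≤ (x i ^ 2 * lam i) * lam m :=
          mul_le_mul_of_nonneg_left (hle i)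
            (mul_nonneg (sq_nonneg _) (hpos i).le)
    have h2 : 0 < ∑ i, x i ^ 2 * lam i := by
      have hc : lam ⟨0, by omega⟩ = ∑ i, x i ^ 2 * lam ⟨0, by omega⟩ := by
        rw [← Finset.sum_mul, hx2, one_mul]
      have hs : ∑ i, x i ^ 2 * lam ⟨0, by omega⟩ ≤ ∑ i, x i ^ 2 * lam i :=
        Finset.sum_le_sum fun i _ =>
          mul_le_mul_of_nonneg_left (hge i) (sq_nonneg _)
      have := hpos ⟨0, by omega⟩
      linarith
    have h4 : 4 * lam m < ∑ j, lam j := by linarith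
    nlinarith [mul_lt_mul_of_pos_left h4 h2]
end

section
/- Let E be a real inner product space, n ≥ 1, let B : EuclideanSpace ℝ (Fin n) → EuclideanSpace ℝ (Fin n) → E be a symmetric bilinear map, let (e_i) be the standard orthonormal basis, and let x be a unit vector. If Σ_{i=1}^{n} (4·⟨B(x,e_i),B(x,e_i)⟩ − ⟨B(x,x),B(e_i,e_i)⟩) < 0, then for every real p with 2 ≤ p ≤ 4 one has (p−2)·⟨B(x,x),B(x,x)⟩ + Σ_{i=1}^{n} (2·⟨B(x,e_i),B(x,e_i)⟩ − ⟨B(x,x),B(e_i,e_i)⟩) < 0. -/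
open scoped RealInnerProductSpace

/-- Theorem 6.1(i) (pointwise content): if the Φ-SSU functional of a symmetric
second fundamental form `B` is negative at a unit vector `x`, then so is the
`p`-SSU functional for every `2 ≤ p ≤ 4`. -/
theorem stmt_3 (E : Type*) [NormedAddCommGroup E] [InnerProductSpace ℝ E]
    (n : ℕ) (hn : 1 ≤ n)
    (B : EuclideanSpace ℝ (Fin n) →ₗ[ℝ] EuclideanSpace ℝ (Fin n) →ₗ[ℝ] E)
    (hBsymm : ∀ u v, B u v = B v u)
    (e : Fin n → EuclideanSpace ℝ (Fin n))
    (he : e = fun i => EuclideanSpace.single i (1 : ℝ))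
    (x : EuclideanSpace ℝ (Fin n)) (hx : ‖x‖ = 1)
    (hPhi : (∑ i, (4 * ⟪B x (e i), B x (e i)⟫ - ⟪B x x, B (e i) (e i)⟫)) < 0) :
    ∀ p : ℝ, 2 ≤ p → p ≤ 4 →
      (p - 2) * ⟪B x x, B x x⟫ +
        (∑ i, (2 * ⟪B x (e i), B x (e i)⟫ - ⟪B x x, B (e i) (e i)⟫)) < 0 := by
  intro p hp2 hp4
  set t : ℝ := ⟪B x x, B x x⟫ with ht_def
  set S : ℝ := ∑ i, ⟪B x (e i), B x (e i)⟫ with hS_def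
  have ht : 0 ≤ t := real_inner_self_nonneg
  have hS : 0 ≤ S := Finset.sum_nonneg fun i _ => real_inner_self_nonneg
  -- x = ∑ x_i e_i
  have hxsum : x = ∑ i, x i • e i := by
    subst he
    ext j
    rw [WithLp.ofLp_sum, Finset.sum_apply]
    simp [EuclideanSpace.single_apply]
  have hBxx : B x x = ∑ i, x i • B x (e i) := by
    have h : B x x = B x (∑ i, x i • e i) := by rw [← hxsum]
    rw [h, map_sum]
    simp
  -- expand ⟪u,u⟫
  have hexp : t = ∑ i, x i * ⟪B x x, B x (e i)⟫ := by
    rw [ht_def]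
    nth_rewrite 2 [hBxx]
    rw [inner_sum]
    exact Finset.sum_congr rfl fun i _ => real_inner_smul_right _ _ _
  have hx2 : ∑ i, x i * x i = 1 := by
    have h1 : (⟪x, x⟫ : ℝ) = ∑ i, x i * x i := by
      simp only [PiLp.inner_apply, RCLike.inner_apply, conj_trivial]
    have h2 : (⟪x, x⟫ : ℝ) = 1 := by
      rw [real_inner_self_eq_norm_sq, hx]; norm_num
    linarith [h1 ▸ h2]
  -- Cauchy–Schwarz (discrete)
  have hcs : (∑ i, x i * ⟪B x x, B x (e i)⟫) ^ 2 ≤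
      (∑ i, x i ^ 2) * ∑ i, ⟪B x x, B x (e i)⟫ ^ 2 :=
    Finset.sum_mul_sq_le_sq_mul_sq Finset.univ _ _
  have hterm : ∀ i : Fin n, ⟪B x x, B x (e i)⟫ ^ 2 ≤ t * ⟪B x (e i), B x (e i)⟫ := by
    intro i
    have := real_inner_mul_inner_self_le (B x x) (B x (e i))
    nlinarith [this]
  have hsum2 : ∑ i, ⟪B x x, B x (e i)⟫ ^ 2 ≤ t * S := by
    rw [hS_def, Finset.mul_sum]
    exact Finset.sum_le_sum fun i _ => hterm i
  have hx2' : ∑ i, x i ^ 2 = 1 := by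
    simpa [sq] using hx2
  have key : t * t ≤ t * S := by
    have h1 : t ^ 2 ≤ (∑ i, x i ^ 2) * ∑ i, ⟪B x x, B x (e i)⟫ ^ 2 := by
      rw [hexp]; exact hcs
    rw [hx2', one_mul] at h1
    nlinarith [h1, hsum2]
  have htS : t ≤ S := by nlinarith [key, ht, hS]
  -- conclude
  have hsplit : ∑ i, (4 * ⟪B x (e i), B x (e i)⟫ - ⟪B x x, B (e i) (e i)⟫) =
      2 * S + ∑ i, (2 * ⟪B x (e i), B x (e i)⟫ - ⟪B x x, B (e i) (e i)⟫) := by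
    rw [hS_def, Finset.mul_sum, ← Finset.sum_add_distrib]
    exact Finset.sum_congr rfl fun i _ => by ring
  rw [hsplit] at hPhi
  nlinarith [htS, ht, hPhi, hp2, hp4]
end

section
/- Let E be a real inner product space, n ≥ 1, let B : EuclideanSpace ℝ (Fin n) → EuclideanSpace ℝ (Fin n) → E be a symmetric bilinear map, and let (e_i) be the standard orthonormal basis. If for every unit vector x one has Σ_{i=1}^{n} (4·⟨B(x,e_i),B(x,e_i)⟩ − ⟨B(x,x),B(e_i,e_i)⟩) < 0, then n > 4. -/
open scoped RealInnerProductSpace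

/-- If a quartic polynomial with zero constant term is ≤ 0 everywhere,
its quadratic coefficient is ≤ 0. -/
lemma quad_coeff_nonpos (c1 c2 c3 c4 : ℝ)
    (h : ∀ t : ℝ, c1*t + c2*t^2 + c3*t^3 + c4*t^4 ≤ 0) : c2 ≤ 0 := by
  have key : ∀ t ∈ Set.Ioi (0:ℝ), c2 ≤ -c4 * t^2 := by
    intro t ht
    have ht0 : 0 < t := ht
    have h1 := h t
    have h2 := h (-t)
    have ht2 : 0 < t^2 := by positivity
    nlinarith [mul_pos ht2 ht2]
  have lim : Filter.Tendsto (fun t : ℝ => -c4 * t^2) (nhdsWithin 0 (Set.Ioi 0)) (nhds 0) := by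
    have hc : Continuous fun t : ℝ => -c4 * t^2 := by continuity
    have h0 : Filter.Tendsto (fun t : ℝ => -c4 * t^2) (nhdsWithin 0 (Set.Ioi 0)) (nhds (-c4 * 0^2)) :=
      (hc.tendsto 0).mono_left (nhdsWithin_le_nhds (s := Set.Ioi 0))
    simpa using h0
  exact ge_of_tendsto lim (Filter.eventually_of_mem self_mem_nhdsWithin key)

section Bilin

variable {V F : Type*} [NormedAddCommGroup V] [InnerProductSpace ℝ V]
  [AddCommGroup F] [Module ℝ F] {ι : Type*} [Fintype ι]

lemma bilin_expand (T : V →ₗ[ℝ] V →ₗ[ℝ] F) (b : OrthonormalBasis ι ℝ V) (y z : V) :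
    T y z = ∑ i, ∑ j, (⟪b i, y⟫ * ⟪b j, z⟫) • T (b i) (b j) := by
  classical
  conv_lhs => rw [← b.sum_repr' y, ← b.sum_repr' z]
  simp only [map_sum, LinearMap.sum_apply, map_smul, LinearMap.smul_apply,
    Finset.smul_sum, smul_smul]
  rw [Finset.sum_comm]
  exact Finset.sum_congr rfl fun i _ => Finset.sum_congr rfl fun j _ => by
    rw [mul_comm]

lemma sum_diag_eq (T : V →ₗ[ℝ] V →ₗ[ℝ] F) (b c : OrthonormalBasis ι ℝ V) :
    ∑ i, T (b i) (b i) = ∑ i, T (c i) (c i) := by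
  have expand : ∀ i, T (b i) (b i)
      = ∑ j, ∑ k, (⟪c j, b i⟫ * ⟪c k, b i⟫) • T (c j) (c k) :=
    fun i => bilin_expand T c (b i) (b i)
  calc ∑ i, T (b i) (b i)
      = ∑ j, ∑ k, (∑ i, ⟪c j, b i⟫ * ⟪c k, b i⟫) • T (c j) (c k) := by
        simp_rw [expand, Finset.sum_smul]
        rw [Finset.sum_comm]
        exact Finset.sum_congr rfl fun j _ => Finset.sum_comm
    _ = ∑ j, ∑ k, (⟪c j, c k⟫) • T (c j) (c k) := by
        refine Finset.sum_congr rfl fun j _ => Finset.sum_congr rfl fun k _ => ?_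
        congr 1
        have : ∀ i, ⟪c k, b i⟫ = ⟪b i, c k⟫ := fun i => real_inner_comm _ _
        simp_rw [this]
        exact b.sum_inner_mul_inner (c j) (c k)
    _ = ∑ j, T (c j) (c j) := by
        classical
        have hite := orthonormal_iff_ite.mp c.orthonormal
        refine Finset.sum_congr rfl fun j _ => ?_
        rw [Finset.sum_eq_single j]
        · rw [hite j j, if_pos rfl]; norm_num
        · intro k _ hk
          rw [hite j k, if_neg fun h => hk h.symm]
          simp
        · intro h; exact absurd (Finset.mem_univ j) h

end Bilin

/-- Theorem 7.1 (algebraic content): if a symmetric bilinear map `B`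
(the second fundamental form) satisfies the Φ-SSU condition at every unit
vector, then `n > 4`. -/
theorem stmt_4 (E : Type*) [NormedAddCommGroup E] [InnerProductSpace ℝ E]
    (n : ℕ) (hn : 1 ≤ n)
    (B : EuclideanSpace ℝ (Fin n) →ₗ[ℝ] EuclideanSpace ℝ (Fin n) →ₗ[ℝ] E)
    (hBsymm : ∀ u v, B u v = B v u)
    (e : Fin n → EuclideanSpace ℝ (Fin n))
    (he : e = fun i => EuclideanSpace.single i (1 : ℝ))
    (hPhi : ∀ x : EuclideanSpace ℝ (Fin n), ‖x‖ = 1 →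
      (∑ i, (4 * ⟪B x (e i), B x (e i)⟫ - ⟪B x x, B (e i) (e i)⟫)) < 0) :
    4 < n := by
  classical
  haveI : NeZero n := ⟨by omega⟩
  let std : OrthonormalBasis (Fin n) ℝ (EuclideanSpace ℝ (Fin n)) :=
    EuclideanSpace.basisFun (Fin n) ℝ
  have hstd : ∀ i, std i = e i := by
    intro i; simp [std, he, EuclideanSpace.basisFun_apply]
  -- continuity of y ↦ ⟪B y y, B y y⟫
  have hBy : ∀ y : EuclideanSpace ℝ (Fin n),
      B y y = ∑ i, ∑ j, (⟪std i, y⟫ * ⟪std j, y⟫) • B (std i) (std j) :=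
    fun y => bilin_expand B std y y
  have hcB : Continuous fun y : EuclideanSpace ℝ (Fin n) => B y y := by
    rw [show (fun y : EuclideanSpace ℝ (Fin n) => B y y)
        = fun y : EuclideanSpace ℝ (Fin n) =>
            ∑ i, ∑ j, (⟪std i, y⟫ * ⟪std j, y⟫) • B (std i) (std j)
      from funext hBy]
    refine continuous_finset_sum _ fun i _ => continuous_finset_sum _ fun j _ => ?_
    exact ((Continuous.inner continuous_const continuous_id).mul
      (Continuous.inner continuous_const continuous_id)).smul continuous_const
  have hfc : Continuous fun y : EuclideanSpace ℝ (Fin n) => ⟪B y y, B y y⟫ :=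
    hcB.inner hcB
  -- a maximizer on the unit sphere
  have hse : e 0 ∈ Metric.sphere (0 : EuclideanSpace ℝ (Fin n)) 1 := by
    rw [mem_sphere_zero_iff_norm, ← hstd]
    exact std.orthonormal.1 0
  obtain ⟨x, hxS, hmax⟩ :=
    (isCompact_sphere (0 : EuclideanSpace ℝ (Fin n)) 1).exists_isMaxOn
      ⟨e 0, hse⟩ hfc.continuousOn
  have hx1 : ‖x‖ = 1 := mem_sphere_zero_iff_norm.mp hxS
  -- extend x to an orthonormal basis b with b 0 = x
  have hxon : Orthonormal ℝ (Set.restrict {(0 : Fin n)} (fun _ => x)) := by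
    constructor
    · intro i; exact hx1
    · intro i j hij
      exact absurd (Subsingleton.elim i j) hij
  obtain ⟨b, hb0⟩ := hxon.exists_orthonormalBasis_extension_of_card_eq
    (by simp [finrank_euclideanSpace])
  have hbx : b 0 = x := hb0 0 rfl
  -- second-variation inequality at each b i, i ≠ 0
  have hkey : ∀ i : Fin n, i ≠ 0 →
      4*⟪B x (b i), B x (b i)⟫ + 2*⟪B x x, B (b i) (b i)⟫ - 2*⟪B x x, B x x⟫ ≤ 0 := by
    intro i hi
    set w := b i with hw
    have hxw : ⟪x, w⟫ = 0 := by
      rw [← hbx]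
      exact b.orthonormal.2 (Ne.symm hi)
    have hw1 : ‖w‖ = 1 := b.orthonormal.1 i
    suffices harg : ∀ t : ℝ, (4*⟪B x x, B x w⟫)*t
          + (4*⟪B x w, B x w⟫ + 2*⟪B x x, B w w⟫ - 2*⟪B x x, B x x⟫)*t^2
          + (4*⟪B x w, B w w⟫)*t^3 + (⟪B w w, B w w⟫ - ⟪B x x, B x x⟫)*t^4 ≤ 0 by
      have key := quad_coeff_nonpos _ _ _ _ harg
      linarith
    intro t
    set v := x + t • w with hv
    have hnv : ‖v‖^2 = 1 + t^2 := by
      rw [hv, norm_add_sq_real, real_inner_smul_right, hxw, norm_smul, hx1]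
      simp [mul_pow, abs_of_nonneg, sq_abs, hw1]
    have hpos : (0:ℝ) < 1 + t^2 := by positivity
    set s := (Real.sqrt (1 + t^2))⁻¹ with hs
    have hsqrtpos : (0:ℝ) < Real.sqrt (1 + t^2) := Real.sqrt_pos.mpr hpos
    have hnvs : ‖v‖ = Real.sqrt (1 + t^2) := by
      rw [← Real.sqrt_sq (norm_nonneg v), hnv]
    have hu : s • v ∈ Metric.sphere (0 : EuclideanSpace ℝ (Fin n)) 1 := by
      rw [mem_sphere_zero_iff_norm, norm_smul, hnvs, hs, Real.norm_eq_abs,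
        abs_of_nonneg (by positivity)]
      exact inv_mul_cancel₀ (ne_of_gt hsqrtpos)
    have hfu : ⟪B (s•v) (s•v), B (s•v) (s•v)⟫ ≤ ⟪B x x, B x x⟫ := hmax hu
    have hss : s * s = (1 + t^2)⁻¹ := by
      rw [hs, ← mul_inv, Real.mul_self_sqrt (le_of_lt hpos)]
    have hBuu : B (s • v) (s • v) = (s*s) • B v v := by
      simp only [map_smul, LinearMap.smul_apply, smul_smul]
    have hfu' : ((1+t^2)⁻¹ * (1+t^2)⁻¹) * ⟪B v v, B v v⟫ ≤ ⟪B x x, B x x⟫ := by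
      rw [hBuu, real_inner_smul_left, real_inner_smul_right, ← mul_assoc, hss] at hfu
      linarith
    have hQ : ⟪B v v, B v v⟫ ≤ (1+t^2)^2 * ⟪B x x, B x x⟫ := by
      have h2 := mul_le_mul_of_nonneg_left hfu' (le_of_lt (pow_pos hpos 2))
      calc ⟪B v v, B v v⟫
          = (1+t^2)^2 * (((1+t^2)⁻¹ * (1+t^2)⁻¹) * ⟪B v v, B v v⟫) := by
            field_simp
        _ ≤ (1+t^2)^2 * ⟪B x x, B x x⟫ := h2
    have hqexp : B v v = B x x + (2*t) • B x w + (t^2) • B w w := by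
      rw [hv]
      simp only [map_add, map_smul, LinearMap.add_apply, LinearMap.smul_apply, smul_smul]
      rw [hBsymm w x]
      module
    have hqq : ⟪B v v, B v v⟫
        = ⟪B x x, B x x⟫ + 4*t*⟪B x x, B x w⟫
          + t^2*(4*⟪B x w, B x w⟫ + 2*⟪B x x, B w w⟫)
          + 4*t^3*⟪B x w, B w w⟫ + t^4*⟪B w w, B w w⟫ := by
      rw [hqexp]
      simp only [inner_add_left, inner_add_right, real_inner_smul_left,
        real_inner_smul_right, real_inner_comm (B x w) (B x x),
        real_inner_comm (B w w) (B x x), real_inner_comm (B w w) (B x w)]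
      ring
    calc (4*⟪B x x, B x w⟫)*t
          + (4*⟪B x w, B x w⟫ + 2*⟪B x x, B w w⟫ - 2*⟪B x x, B x x⟫)*t^2
          + (4*⟪B x w, B w w⟫)*t^3 + (⟪B w w, B w w⟫ - ⟪B x x, B x x⟫)*t^4
        = ⟪B v v, B v v⟫ - (1+t^2)^2 * ⟪B x x, B x x⟫ := by rw [hqq]; ring
      _ ≤ 0 := by linarith
  -- rewrite the Φ-SSU sum in the basis b
  have hS1 : ∑ i, ⟪B x (e i), B x (e i)⟫ = ∑ i, ⟪B x (b i), B x (b i)⟫ := by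
    let T1 : EuclideanSpace ℝ (Fin n) →ₗ[ℝ] EuclideanSpace ℝ (Fin n) →ₗ[ℝ] ℝ :=
      LinearMap.mk₂ ℝ (fun u v => ⟪B x u, B x v⟫)
      (fun u u' v => by simp [map_add, inner_add_left])
      (fun r u v => by simp [map_smul, real_inner_smul_left])
      (fun u v v' => by simp [map_add, inner_add_right])
      (fun r u v => by simp [map_smul, real_inner_smul_right])
    have h := sum_diag_eq T1 std b
    simpa [T1, hstd] using h
  have hS2 : ∑ i, ⟪B x x, B (e i) (e i)⟫ = ∑ i, ⟪B x x, B (b i) (b i)⟫ := by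
    have h := sum_diag_eq B std b
    simp_rw [hstd] at h
    rw [← inner_sum, ← inner_sum, h]
  have hsum := hPhi x hx1
  have hsum' : ∑ i, (4 * ⟪B x (b i), B x (b i)⟫ - ⟪B x x, B (b i) (b i)⟫) < 0 := by
    rw [Finset.sum_sub_distrib, ← Finset.mul_sum, ← hS1, ← hS2,
      Finset.mul_sum, ← Finset.sum_sub_distrib]
    exact hsum
  -- split off the i = 0 term and bound the rest
  set A := ⟪B x x, B x x⟫ with hA
  have hA0 : 0 ≤ A := real_inner_self_nonneg
  have hsplit := Finset.add_sum_erase Finset.univ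
    (fun i => 4 * ⟪B x (b i), B x (b i)⟫ - ⟪B x x, B (b i) (b i)⟫)
    (Finset.mem_univ (0 : Fin n))
  have hterm0 : 4 * ⟪B x (b 0), B x (b 0)⟫ - ⟪B x x, B (b 0) (b 0)⟫ = 3 * A := by
    rw [hbx, hA]; ring
  have hrest : ∑ _i ∈ Finset.univ.erase (0 : Fin n), (-A)
      ≤ ∑ i ∈ Finset.univ.erase (0 : Fin n),
        (4 * ⟪B x (b i), B x (b i)⟫ - ⟪B x x, B (b i) (b i)⟫) := by
    refine Finset.sum_le_sum fun i hi => ?_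
    have hi0 : i ≠ 0 := (Finset.mem_erase.mp hi).1
    have h1 := hkey i hi0
    have h2 : (0:ℝ) ≤ ⟪B x (b i), B x (b i)⟫ := real_inner_self_nonneg
    linarith
  have hcard : (Finset.univ.erase (0 : Fin n)).card = n - 1 := by
    rw [Finset.card_erase_of_mem (Finset.mem_univ 0), Finset.card_univ, Fintype.card_fin]
  have hrest' : ∑ _i ∈ Finset.univ.erase (0 : Fin n), (-A) = -(((n:ℝ) - 1) * A) := by
    rw [Finset.sum_const, hcard, nsmul_eq_mul, Nat.cast_sub hn]
    push_cast
    ring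
  by_contra hcon
  push_neg at hcon
  have hn4 : (n:ℝ) ≤ 4 := by exact_mod_cast hcon
  rw [← hsplit] at hsum'
  beta_reduce at hsum'
  rw [hterm0] at hsum'
  rw [hrest'] at hrest
  nlinarith
end

section
/- Let E be a real inner product space, n ≥ 1, and let B : EuclideanSpace ℝ (Fin n) → EuclideanSpace ℝ (Fin n) → E be a symmetric bilinear map. Suppose x is a unit vector at which the function y ↦ ‖B(y,y)‖² attains its maximum over the unit sphere, i.e. ‖B(y,y)‖ ≤ ‖B(x,x)‖ for every unit vector y. Then for every unit vector y orthogonal to x one has ‖B(x,x)‖² ≥ 2·‖B(x,y)‖² + ⟨B(x,x),B(y,y)⟩. -/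
open scoped RealInnerProductSpace

private lemma norm_sq_combo {E : Type*} [NormedAddCommGroup E] [InnerProductSpace ℝ E]
    (u1 u2 u3 : E) (c1 c2 c3 : ℝ) :
    ‖c1•u1 + c2•u2 + c3•u3‖^2 =
      c1^2*‖u1‖^2 + c2^2*‖u2‖^2 + c3^2*‖u3‖^2
        + 2*c1*c2*⟪u1,u2⟫ + 2*c1*c3*⟪u1,u3⟫ + 2*c2*c3*⟪u2,u3⟫ := by
  rw [← real_inner_self_eq_norm_sq, ← real_inner_self_eq_norm_sq,
    ← real_inner_self_eq_norm_sq, ← real_inner_self_eq_norm_sq]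
  simp only [inner_add_left, inner_add_right, real_inner_smul_left, real_inner_smul_right,
    real_inner_comm u2 u1, real_inner_comm u3 u1, real_inner_comm u3 u2]
  ring

private lemma arith_71 (P Q R S T U : ℝ)
    (key : ∀ a b : ℝ, a^2 + b^2 = 1 →
      a^4*P + 4*a^3*b*Q + a^2*b^2*(4*R+2*S) + 4*a*b^3*T + b^4*U ≤ P)
    (hUP : U ≤ P) : 2*R + S ≤ P := by
  by_contra hcon
  push_neg at hcon
  obtain ⟨k, hk⟩ : ∃ k : ℝ, k = 2*R + S - P := ⟨_, rfl⟩
  obtain ⟨D, hD⟩ : ∃ D : ℝ, D = P - U := ⟨_, rfl⟩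
  have hkpos : 0 < k := by rw [hk]; linarith
  have hDnn : 0 ≤ D := by rw [hD]; linarith
  have hden : 0 < D + 2*k := by linarith
  obtain ⟨b, hb2⟩ : ∃ b : ℝ, b^2 = k/(D+2*k) :=
    ⟨Real.sqrt _, Real.sq_sqrt (by positivity)⟩
  obtain ⟨a, ha2⟩ : ∃ a : ℝ, a^2 = (D+k)/(D+2*k) :=
    ⟨Real.sqrt _, Real.sq_sqrt (by positivity)⟩
  have hab : a^2 + b^2 = 1 := by
    rw [ha2, hb2, ← add_div, show D+k+k = D+2*k by ring]
    exact div_self hden.ne'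
  have k1 := key a b hab
  have k2 := key a (-b) (by rw [neg_sq]; exact hab)
  have hPexp : a^4*P + 2*(a^2*b^2)*P + b^4*P = P := by
    linear_combination ((a^2+b^2+1)*P)*hab
  have hsum2 : 2*k*(a^2*b^2) ≤ D*(b^2*b^2) := by
    rw [hk, hD]; nlinarith [k1, k2, hPexp]
  have hs : a^2*(D+2*k) = D+k := by
    rw [ha2, div_mul_cancel₀ _ hden.ne']
  have ht : b^2*(D+2*k) = k := by
    rw [hb2, div_mul_cancel₀ _ hden.ne']
  have final : 2*k*((D+k)*k) ≤ D*(k*k) := by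
    calc 2*k*((D+k)*k) = (2*k*(a^2*b^2))*(D+2*k)^2 := by
          linear_combination (-(2*k*k))*hs + (-(2*k*(a^2*(D+2*k))))*ht
      _ ≤ (D*(b^2*b^2))*(D+2*k)^2 :=
          mul_le_mul_of_nonneg_right hsum2 (sq_nonneg _)
      _ = D*(k*k) := by
          linear_combination (D*(b^2*(D+2*k)+k))*ht
  nlinarith [final, hkpos, hDnn, mul_pos hkpos (mul_pos hkpos hkpos),
    mul_nonneg hDnn (mul_nonneg hkpos.le hkpos.le)]

/-- Inequality (7.1): the second-derivative test at a maximizer of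
`y ↦ ‖B(y,y)‖²` over the unit sphere. -/
theorem stmt_5 (E : Type*) [NormedAddCommGroup E] [InnerProductSpace ℝ E]
    (n : ℕ) (hn : 1 ≤ n)
    (B : EuclideanSpace ℝ (Fin n) →ₗ[ℝ] EuclideanSpace ℝ (Fin n) →ₗ[ℝ] E)
    (hBsymm : ∀ u v, B u v = B v u)
    (x : EuclideanSpace ℝ (Fin n)) (hx : ‖x‖ = 1)
    (hmax : ∀ y : EuclideanSpace ℝ (Fin n), ‖y‖ = 1 → ‖B y y‖ ≤ ‖B x x‖) :
    ∀ y : EuclideanSpace ℝ (Fin n), ‖y‖ = 1 → ⟪x, y⟫ = 0 →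
      2 * ‖B x y‖ ^ 2 + ⟪B x x, B y y⟫ ≤ ‖B x x‖ ^ 2 := by
  intro y hy hxy
  -- expansion of B along the circle
  have expand : ∀ a b : ℝ, B (a•x+b•y) (a•x+b•y)
      = (a^2)•(B x x) + (2*a*b)•(B x y) + (b^2)•(B y y) := by
    intro a b
    simp only [map_add, map_smul, LinearMap.add_apply, LinearMap.smul_apply, hBsymm y x]
    module
  -- the key polynomial inequality from maximality
  have key : ∀ a b : ℝ, a^2 + b^2 = 1 →
      a^4*‖B x x‖^2 + 4*a^3*b*⟪B x x, B x y⟫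
        + a^2*b^2*(4*‖B x y‖^2+2*⟪B x x, B y y⟫)
        + 4*a*b^3*⟪B x y, B y y⟫ + b^4*‖B y y‖^2 ≤ ‖B x x‖^2 := by
    intro a b hab
    have hz : ‖a•x+b•y‖ = 1 := by
      have h2 : ‖a•x+b•y‖^2 = 1 := by
        rw [← real_inner_self_eq_norm_sq]
        have hyx : ⟪y, x⟫ = 0 := by rw [real_inner_comm]; exact hxy
        simp only [inner_add_left, inner_add_right, real_inner_smul_left,
          real_inner_smul_right, hxy, hyx]
        rw [real_inner_self_eq_norm_sq, real_inner_self_eq_norm_sq, hx, hy]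
        nlinarith
      nlinarith [norm_nonneg (a•x+b•y)]
    have h1 := hmax _ hz
    have h2 : ‖B (a•x+b•y) (a•x+b•y)‖^2 ≤ ‖B x x‖^2 :=
      pow_le_pow_left₀ (norm_nonneg _) h1 2
    rw [expand a b, norm_sq_combo] at h2
    nlinarith [h2]
  have hUP : ‖B y y‖^2 ≤ ‖B x x‖^2 :=
    pow_le_pow_left₀ (norm_nonneg _) (hmax y hy) 2
  have := arith_71 (‖B x x‖^2) ⟪B x x, B x y⟫ (‖B x y‖^2) ⟪B x x, B y y⟫
    ⟪B x y, B y y⟫ (‖B y y‖^2) key hUP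
  linarith
end

section
/- Let E be a real inner product space, let k > 4 be a natural number, let ν ∈ E be a unit vector, and let B₁ : EuclideanSpace ℝ (Fin k) → EuclideanSpace ℝ (Fin k) → E be a symmetric bilinear map with ⟨B₁(u,v),ν⟩ = 0 for all u,v. Define B(u,v) := B₁(u,v) + ⟨u,v⟩·ν and Q := Σ_{i,j=1}^{k} ‖B₁(e_i,e_j)‖², where (e_i) is the standard orthonormal basis. If Q < (k−4)/(√k + 4), then for every unit vector x one has Σ_{i=1}^{k} (4·⟨B(x,e_i),B(x,e_i)⟩ − ⟨B(x,x),B(e_i,e_i)⟩) < 0. -/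
open scoped RealInnerProductSpace

/-- Cauchy–Schwarz-type helper: if `∑ x i ^ 2 = 1` then
`‖∑ i, x i • v i‖ ^ 2 ≤ ∑ i, ‖v i‖ ^ 2`. -/
lemma stmt6_key {k : ℕ} {E : Type*} [NormedAddCommGroup E] [NormedSpace ℝ E]
    (x : Fin k → ℝ) (hx : ∑ i, x i ^ 2 = 1) (v : Fin k → E) :
    ‖∑ i, x i • v i‖ ^ 2 ≤ ∑ i, ‖v i‖ ^ 2 := by
  have h1 : ‖∑ i, x i • v i‖ ≤ ∑ i, |x i| * ‖v i‖ := by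
    refine (norm_sum_le _ _).trans_eq ?_
    simp [norm_smul, Real.norm_eq_abs]
  calc ‖∑ i, x i • v i‖ ^ 2 ≤ (∑ i, |x i| * ‖v i‖) ^ 2 := by
        exact pow_le_pow_left₀ (norm_nonneg _) h1 2
    _ ≤ (∑ i, |x i| ^ 2) * (∑ i, ‖v i‖ ^ 2) :=
        Finset.sum_mul_sq_le_sq_mul_sq _ _ _
    _ = ∑ i, ‖v i‖ ^ 2 := by
        simp only [sq_abs, hx, one_mul]

set_option maxHeartbeats 1000000 in
/-- Section 5, last theorem (pointwise content): a `k`-submanifold (`k > 4`)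
of the unit sphere whose spherical second fundamental form `B₁` satisfies
`‖B₁‖² < (k-4)/(√k+4)` is Φ-SSU. Here `B u v = B₁ u v + ⟪u,v⟫ ν`. -/
theorem stmt_6 (E : Type*) [NormedAddCommGroup E] [InnerProductSpace ℝ E]
    (k : ℕ) (hk : 4 < k)
    (ν : E) (hν : ‖ν‖ = 1)
    (B₁ : EuclideanSpace ℝ (Fin k) →ₗ[ℝ] EuclideanSpace ℝ (Fin k) →ₗ[ℝ] E)
    (hB₁symm : ∀ u v, B₁ u v = B₁ v u)
    (hB₁perp : ∀ u v, ⟪B₁ u v, ν⟫ = 0)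
    (B : EuclideanSpace ℝ (Fin k) → EuclideanSpace ℝ (Fin k) → E)
    (hB : ∀ u v, B u v = B₁ u v + ⟪u, v⟫ • ν)
    (e : Fin k → EuclideanSpace ℝ (Fin k))
    (he : e = fun i => EuclideanSpace.single i (1 : ℝ))
    (Q : ℝ) (hQ : Q = ∑ i, ∑ j, ‖B₁ (e i) (e j)‖ ^ 2)
    (hsmall : Q < ((k : ℝ) - 4) / (Real.sqrt k + 4)) :
    ∀ x : EuclideanSpace ℝ (Fin k), ‖x‖ = 1 →
      (∑ i, (4 * ⟪B x (e i), B x (e i)⟫ - ⟪B x x, B (e i) (e i)⟫)) < 0 := by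
  intro x hx
  have hsqrtk : (0:ℝ) < Real.sqrt k + 4 := by positivity
  -- basic facts about x
  have hx2 : ∑ i, x i ^ 2 = 1 := by
    have h := EuclideanSpace.norm_eq x
    rw [hx] at h
    have h2 : (0:ℝ) ≤ ∑ i, ‖x i‖ ^ 2 := by positivity
    have := Real.sq_sqrt h2
    rw [← h] at this
    simpa [Real.norm_eq_abs, sq_abs] using this.symm
  have hxsum : x = ∑ i, x i • e i := by
    subst he
    have h := (EuclideanSpace.basisFun (Fin k) ℝ).sum_repr x
    simp only [EuclideanSpace.basisFun_repr, EuclideanSpace.basisFun_apply] at h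
    exact h.symm
  -- expansion of B₁ in the first slot
  have hexp : ∀ w, B₁ x w = ∑ i, x i • B₁ (e i) w := by
    intro w
    conv_lhs => rw [hxsum]
    simp [map_sum]
  -- inner products with ν
  have hν2 : ⟪ν, ν⟫ = 1 := by
    rw [real_inner_self_eq_norm_sq, hν]; norm_num
  have hperp' : ∀ u v, ⟪ν, B₁ u v⟫ = 0 := by
    intro u v; rw [real_inner_comm]; exact hB₁perp u v
  -- the main inner-product expansion
  have hBB : ∀ u v u' v', ⟪B u v, B u' v'⟫ =
      ⟪B₁ u v, B₁ u' v'⟫ + ⟪u, v⟫ * ⟪u', v'⟫ := by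
    intro u v u' v'
    rw [hB, hB]
    simp [inner_add_left, inner_add_right, real_inner_smul_left,
      real_inner_smul_right, hB₁perp, hperp', hν2]
    rw [hν]
    ring
  -- inner products with basis vectors
  have hxe : ∀ i, ⟪x, e i⟫ = x i := by
    intro i
    rw [he]
    simpa using EuclideanSpace.inner_single_right (𝕜 := ℝ) i 1 x
  have hee : ∀ i : Fin k, ⟪e i, e i⟫ = (1:ℝ) := by
    intro i
    rw [he]
    simpa using EuclideanSpace.inner_single_right (𝕜 := ℝ) i 1
      (EuclideanSpace.single i (1:ℝ))
  have hxx : ⟪x, x⟫ = (1:ℝ) := by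
    rw [real_inner_self_eq_norm_sq, hx]; norm_num
  -- abbreviations
  set S : ℝ := ∑ i, ‖B₁ x (e i)‖ ^ 2 with hS
  set H : E := ∑ i, B₁ (e i) (e i) with hH
  -- the sum equals 4*S + 4 - ⟪B₁ x x, H⟫ - k
  have hsum : (∑ i, (4 * ⟪B x (e i), B x (e i)⟫ - ⟪B x x, B (e i) (e i)⟫))
      = 4 * S + 4 - ⟪B₁ x x, H⟫ - k := by
    have hterm : ∀ i, 4 * ⟪B x (e i), B x (e i)⟫ - ⟪B x x, B (e i) (e i)⟫
        = 4 * ‖B₁ x (e i)‖ ^ 2 + 4 * x i ^ 2 - ⟪B₁ x x, B₁ (e i) (e i)⟫ - 1 := by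
      intro i
      rw [hBB, hBB, hxe, hee, hxx, real_inner_self_eq_norm_sq]
      ring
    rw [Finset.sum_congr rfl fun i _ => hterm i]
    rw [hH, inner_sum]
    simp only [Finset.sum_sub_distrib, Finset.sum_add_distrib, ← Finset.mul_sum,
      Finset.sum_const, Finset.card_univ, Fintype.card_fin, nsmul_eq_mul, mul_one]
    rw [hx2, hS]
    ring
  rw [hsum]
  -- nonnegativity / basic bounds
  have hQ0 : 0 ≤ Q := by rw [hQ]; positivity
  have hS0 : 0 ≤ S := by rw [hS]; positivity
  -- S ≤ Q
  have hSQ : S ≤ Q := by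
    rw [hS, hQ, Finset.sum_comm]
    refine Finset.sum_le_sum fun i _ => ?_
    rw [hexp (e i)]
    exact stmt6_key x hx2 _
  -- ‖B₁ x x‖² ≤ S
  have hBxx : ‖B₁ x x‖ ^ 2 ≤ S := by
    rw [hexp x]
    refine (stmt6_key x hx2 _).trans_eq ?_
    rw [hS]
    exact Finset.sum_congr rfl fun i _ => by rw [hB₁symm]
  -- ‖H‖² ≤ k * Q
  have hHQ : ‖H‖ ^ 2 ≤ (k:ℝ) * Q := by
    have h1 : ‖H‖ ≤ ∑ i, ‖B₁ (e i) (e i)‖ := norm_sum_le _ _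
    have h2 : ‖H‖ ^ 2 ≤ (∑ i, ‖B₁ (e i) (e i)‖) ^ 2 :=
      pow_le_pow_left₀ (norm_nonneg _) h1 2
    have h3 : (∑ i, ‖B₁ (e i) (e i)‖) ^ 2 ≤ (k:ℝ) * ∑ i, ‖B₁ (e i) (e i)‖ ^ 2 := by
      simpa using sq_sum_le_card_mul_sum_sq
        (s := Finset.univ) (f := fun i => ‖B₁ (e i) (e i)‖)
    have h4 : ∑ i, ‖B₁ (e i) (e i)‖ ^ 2 ≤ Q := by
      rw [hQ]
      refine Finset.sum_le_sum fun i _ => ?_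
      exact Finset.single_le_sum (f := fun j => ‖B₁ (e i) (e j)‖ ^ 2)
        (fun j _ => by positivity) (Finset.mem_univ i)
    calc ‖H‖ ^ 2 ≤ (∑ i, ‖B₁ (e i) (e i)‖) ^ 2 := h2
      _ ≤ (k:ℝ) * ∑ i, ‖B₁ (e i) (e i)‖ ^ 2 := h3
      _ ≤ (k:ℝ) * Q := by
          exact mul_le_mul_of_nonneg_left h4 (by positivity)
  -- the cross term bound: -⟪B₁ x x, H⟫ ≤ √k * Q
  have hcross : -⟪B₁ x x, H⟫ ≤ Real.sqrt k * Q := by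
    have h1 : -⟪B₁ x x, H⟫ ≤ ‖B₁ x x‖ * ‖H‖ := by
      have := abs_real_inner_le_norm (B₁ x x) H
      have h := neg_abs_le (⟪B₁ x x, H⟫)
      nlinarith [abs_nonneg (⟪B₁ x x, H⟫)]
    have hBn : ‖B₁ x x‖ ≤ Real.sqrt Q := by
      rw [← Real.sqrt_sq (norm_nonneg (B₁ x x))]
      exact Real.sqrt_le_sqrt (hBxx.trans hSQ)
    have hHn : ‖H‖ ≤ Real.sqrt k * Real.sqrt Q := by
      rw [← Real.sqrt_sq (norm_nonneg H), ← Real.sqrt_mul (by positivity)]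
      exact Real.sqrt_le_sqrt hHQ
    have h2 : ‖B₁ x x‖ * ‖H‖ ≤ Real.sqrt Q * (Real.sqrt k * Real.sqrt Q) := by
      exact mul_le_mul hBn hHn (norm_nonneg _) (Real.sqrt_nonneg _)
    have h3 : Real.sqrt Q * (Real.sqrt k * Real.sqrt Q) = Real.sqrt k * Q := by
      rw [show Real.sqrt Q * (Real.sqrt k * Real.sqrt Q)
        = Real.sqrt k * (Real.sqrt Q * Real.sqrt Q) by ring,
        Real.mul_self_sqrt hQ0]
    linarith
  -- conclude
  have hmain : Q * (Real.sqrt k + 4) < (k:ℝ) - 4 := by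
    exact (lt_div_iff₀ hsqrtk).mp hsmall
  nlinarith [hcross, hSQ, hS0]
end

section
/- Let E be a real inner product space, k ≥ 1 a natural number, ν ∈ E a unit vector, Λ > 0 a real number, B₁ : EuclideanSpace ℝ (Fin k) → EuclideanSpace ℝ (Fin k) → E a symmetric bilinear map with ⟨B₁(u,v),ν⟩ = 0 for all u,v and with Σ_{i=1}^{k} B₁(e_i,e_i) = 0 (minimality), and b̃ : EuclideanSpace ℝ (Fin k) → EuclideanSpace ℝ (Fin k) → ℝ a symmetric bilinear form with 0 < b̃(y,y) ≤ Λ·‖y‖² for every y ≠ 0 (convexity and principal-curvature bound). Define B(u,v) := B₁(u,v) + b̃(u,v)·ν. If x is a unit vector with Σ_{i=1}^{k} (⟨B(x,x),B(e_i,e_i)⟩ − ⟨B(x,e_i),B(x,e_i)⟩) > (3/4)·k·Λ², then Σ_{i=1}^{k} (4·⟨B(x,e_i),B(x,e_i)⟩ − ⟨B(x,x),B(e_i,e_i)⟩) < 0. -/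
open scoped RealInnerProductSpace

/-- Section 5 theorem on minimal submanifolds of convex hypersurfaces
(pointwise content): with `B = B₁ + b̃ ν`, `B₁` trace-free (minimality) and
`0 < b̃(y,y) ≤ Λ‖y‖²`, a Ricci bound `Ric(x) > (3/4) k Λ²` at a unit vector
`x` forces the Φ-SSU functional to be negative at `x`. -/
theorem stmt_7 (E : Type*) [NormedAddCommGroup E] [InnerProductSpace ℝ E]
    (k : ℕ) (hk : 1 ≤ k)
    (ν : E) (hν : ‖ν‖ = 1) (Lam : ℝ) (hLam : 0 < Lam)
    (B₁ : EuclideanSpace ℝ (Fin k) →ₗ[ℝ] EuclideanSpace ℝ (Fin k) →ₗ[ℝ] E)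
    (hB₁symm : ∀ u v, B₁ u v = B₁ v u)
    (hB₁perp : ∀ u v, ⟪B₁ u v, ν⟫ = 0)
    (e : Fin k → EuclideanSpace ℝ (Fin k))
    (he : e = fun i => EuclideanSpace.single i (1 : ℝ))
    (hmin : (∑ i, B₁ (e i) (e i)) = 0)
    (btil : EuclideanSpace ℝ (Fin k) →ₗ[ℝ] EuclideanSpace ℝ (Fin k) →ₗ[ℝ] ℝ)
    (hbsymm : ∀ u v, btil u v = btil v u)
    (hbpos : ∀ y : EuclideanSpace ℝ (Fin k), y ≠ 0 → 0 < btil y y)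
    (hbbound : ∀ y : EuclideanSpace ℝ (Fin k), y ≠ 0 → btil y y ≤ Lam * ‖y‖ ^ 2)
    (B : EuclideanSpace ℝ (Fin k) → EuclideanSpace ℝ (Fin k) → E)
    (hB : ∀ u v, B u v = B₁ u v + btil u v • ν)
    (x : EuclideanSpace ℝ (Fin k)) (hx : ‖x‖ = 1)
    (hRic : (3 / 4 : ℝ) * k * Lam ^ 2 <
      ∑ i, (⟪B x x, B (e i) (e i)⟫ - ⟪B x (e i), B x (e i)⟫)) :
    (∑ i, (4 * ⟪B x (e i), B x (e i)⟫ - ⟪B x x, B (e i) (e i)⟫)) < 0 := by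
  have hν2 : ⟪ν, ν⟫ = (1 : ℝ) := by
    rw [real_inner_self_eq_norm_sq, hν]; norm_num
  have hxne : x ≠ 0 := by
    intro h; rw [h, norm_zero] at hx; norm_num at hx
  have hnorm_e : ∀ i, ‖e i‖ = 1 := by
    subst he; intro i; simp
  have hene : ∀ i, e i ≠ 0 := by
    intro i h; have := hnorm_e i; rw [h, norm_zero] at this; norm_num at this
  -- inner product with ν
  have hBν : ∀ u v, ⟪B u v, ν⟫ = btil u v := by
    intro u v
    rw [hB, inner_add_left, hB₁perp, real_inner_smul_left, hν2]
    ring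
  -- trace of B
  have hsum : ∑ i, B (e i) (e i) = (∑ i, btil (e i) (e i)) • ν := by
    simp only [hB]
    rw [Finset.sum_add_distrib, hmin, zero_add, ← Finset.sum_smul]
  set S : ℝ := ∑ i, btil (e i) (e i) with hS
  set Sa : ℝ := ∑ i, ⟪B x (e i), B x (e i)⟫ with hSa
  set Sb : ℝ := ∑ i, ⟪B x x, B (e i) (e i)⟫ with hSb
  have hSbval : Sb = btil x x * S := by
    rw [hSb, ← inner_sum, hsum, real_inner_smul_right, hBν, mul_comm]
  -- bounds
  have hSle : S ≤ (k : ℝ) * Lam := by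
    rw [hS]
    calc (∑ i, btil (e i) (e i)) ≤ ∑ _i : Fin k, Lam := by
          apply Finset.sum_le_sum
          intro i _
          have := hbbound (e i) (hene i)
          rwa [hnorm_e i, one_pow, mul_one] at this
      _ = (k : ℝ) * Lam := by simp [Finset.sum_const, mul_comm]
  have hSnn : 0 ≤ S := by
    rw [hS]
    exact Finset.sum_nonneg fun i _ => (hbpos (e i) (hene i)).le
  have hbx : btil x x ≤ Lam := by
    have := hbbound x hxne
    rwa [hx, one_pow, mul_one] at this
  have hSble : Sb ≤ (k : ℝ) * Lam ^ 2 := by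
    rw [hSbval]
    calc btil x x * S ≤ Lam * ((k : ℝ) * Lam) :=
          mul_le_mul hbx hSle hSnn hLam.le
      _ = (k : ℝ) * Lam ^ 2 := by ring
  have hRic' : (3 / 4 : ℝ) * k * Lam ^ 2 < Sb - Sa := by
    rw [hSb, hSa, ← Finset.sum_sub_distrib]
    exact hRic
  have hgoal : (∑ i, (4 * ⟪B x (e i), B x (e i)⟫ - ⟪B x x, B (e i) (e i)⟫))
      = 4 * Sa - Sb := by
    rw [hSa, hSb, Finset.mul_sum, ← Finset.sum_sub_distrib]
  rw [hgoal]
  linarith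
end

section
/- Let E be a real inner product space, k ≥ 1 a natural number, ν ∈ E a unit vector, and B₁ : EuclideanSpace ℝ (Fin k) → EuclideanSpace ℝ (Fin k) → E a symmetric bilinear map with ⟨B₁(u,v),ν⟩ = 0 for all u,v and with Σ_{i=1}^{k} B₁(e_i,e_i) = 0 (minimality in the unit sphere). Define B(u,v) := B₁(u,v) + ⟨u,v⟩·ν. If x is a unit vector with Σ_{i=1}^{k} (⟨B(x,x),B(e_i,e_i)⟩ − ⟨B(x,e_i),B(x,e_i)⟩) > (3/4)·k, then Σ_{i=1}^{k} (4·⟨B(x,e_i),B(x,e_i)⟩ − ⟨B(x,x),B(e_i,e_i)⟩) < 0. -/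
open scoped RealInnerProductSpace

/-- Corollary 5.4 (pointwise content): for a minimal `k`-submanifold of the
unit sphere (so `B u v = B₁ u v + ⟪u,v⟫ ν` with `B₁` trace-free), a Ricci
bound `Ric(x) > (3/4) k` at a unit vector `x` forces the Φ-SSU functional to
be negative at `x`. -/
theorem stmt_8 (E : Type*) [NormedAddCommGroup E] [InnerProductSpace ℝ E]
    (k : ℕ) (hk : 1 ≤ k)
    (ν : E) (hν : ‖ν‖ = 1)
    (B₁ : EuclideanSpace ℝ (Fin k) →ₗ[ℝ] EuclideanSpace ℝ (Fin k) →ₗ[ℝ] E)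
    (hB₁symm : ∀ u v, B₁ u v = B₁ v u)
    (hB₁perp : ∀ u v, ⟪B₁ u v, ν⟫ = 0)
    (e : Fin k → EuclideanSpace ℝ (Fin k))
    (he : e = fun i => EuclideanSpace.single i (1 : ℝ))
    (hmin : (∑ i, B₁ (e i) (e i)) = 0)
    (B : EuclideanSpace ℝ (Fin k) → EuclideanSpace ℝ (Fin k) → E)
    (hB : ∀ u v, B u v = B₁ u v + ⟪u, v⟫ • ν)
    (x : EuclideanSpace ℝ (Fin k)) (hx : ‖x‖ = 1)
    (hRic : (3 / 4 : ℝ) * k <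
      ∑ i, (⟪B x x, B (e i) (e i)⟫ - ⟪B x (e i), B x (e i)⟫)) :
    (∑ i, (4 * ⟪B x (e i), B x (e i)⟫ - ⟪B x x, B (e i) (e i)⟫)) < 0 := by
  have hνν : ⟪ν, ν⟫ = 1 := by
    rw [real_inner_self_eq_norm_mul_norm, hν]; ring
  have hperp' : ∀ u v, ⟪ν, B₁ u v⟫ = 0 := fun u v => by
    rw [real_inner_comm]; exact hB₁perp u v
  have key : ∀ u v u' v', ⟪B u v, B u' v'⟫ =
      ⟪B₁ u v, B₁ u' v'⟫ + ⟪u, v⟫ * ⟪u', v'⟫ := by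
    intro u v u' v'
    rw [hB, hB]
    simp [inner_add_left, inner_add_right, real_inner_smul_left,
      real_inner_smul_right, hB₁perp, hperp', hνν]
    rw [hν]; ring
  have hxx : ⟪x, x⟫ = 1 := by
    rw [real_inner_self_eq_norm_mul_norm, hx]; ring
  have hee : ∀ i, ⟪e i, e i⟫ = 1 := by
    subst he; intro i
    simp [real_inner_self_eq_norm_mul_norm]
  have hxe : ∀ i, ⟪x, e i⟫ = x i := by
    subst he; intro i
    simp [EuclideanSpace.inner_single_right]
  have hsum1 : ∑ i, ⟪B x x, B (e i) (e i)⟫ = (k : ℝ) := by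
    have : ∑ i, ⟪B x x, B (e i) (e i)⟫
        = ∑ i, (⟪B₁ x x, B₁ (e i) (e i)⟫ + ⟪x, x⟫ * ⟪e i, e i⟫) := by
      refine Finset.sum_congr rfl fun i _ => key _ _ _ _
    rw [this, Finset.sum_add_distrib, ← inner_sum, hmin, inner_zero_right]
    simp [hxx, hee, hx, he, EuclideanSpace.norm_single]
  have hsum2 : ∑ i, ⟪x, e i⟫ * ⟪x, e i⟫ = 1 := by
    have : ∑ i, ⟪x, e i⟫ * ⟪x, e i⟫ = ⟪x, x⟫ := by
      rw [PiLp.inner_apply]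
      refine Finset.sum_congr rfl fun i _ => by
        rw [hxe i]; simp [RCLike.inner_apply, pow_two]
    rw [this, hxx]
  set S : ℝ := ∑ i, ⟪B₁ x (e i), B₁ x (e i)⟫ with hS
  have hsum3 : ∑ i, ⟪B x (e i), B x (e i)⟫ = S + 1 := by
    have : ∑ i, ⟪B x (e i), B x (e i)⟫
        = ∑ i, (⟪B₁ x (e i), B₁ x (e i)⟫ + ⟪x, e i⟫ * ⟪x, e i⟫) := by
      refine Finset.sum_congr rfl fun i _ => key _ _ _ _
    rw [this, Finset.sum_add_distrib, hsum2]
  have hRic' : (3 / 4 : ℝ) * k < (k : ℝ) - (S + 1) := by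
    rw [Finset.sum_sub_distrib, hsum1, hsum3] at hRic
    exact hRic
  have : (∑ i, (4 * ⟪B x (e i), B x (e i)⟫ - ⟪B x x, B (e i) (e i)⟫))
      = 4 * (S + 1) - k := by
    rw [Finset.sum_sub_distrib, ← Finset.mul_sum, hsum1, hsum3]
  rw [this]
  linarith
end
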